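/- Let q be a prime power and let d, m be integers with 1 ≤ d ≤ m and d ≡ m (mod 2). For g = (g_0, g_1, …, g_{(m−d)/2}) ∈ F_{q^m}^{(m−d)/2 + 1}, define the symmetric F_q-bilinear form S_g on F_{q^m} by S_g(x,y) = Tr_m(g_0·xy) + Σ_{i=1}^{(m−d)/2} Tr_m(g_i·(x·y^{q^i} + x^{q^i}·y)). Then the map g ↦ S_g is injective and, for every g ≠ 0, the form S_g has rank at least d. Consequently Z = {S_g : g ∈ F_{q^m}^{(m−d)/2+1}} is an additive set of symmetric bilinear forms of cardinality q^{m(m−d+2)/2} in which any two distinct elements differ by a form of rank at least d. -/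

import Mathlib

open scoped BigOperators

/-- The rank of a bilinear form, given as a plain function `S : V → V → F`, on a
finite-dimensional `F`-vector space `V`:  `dim V` minus the dimension of the radical
`{x : S x y = 0 for all y}` (a subspace, here realised via its span). -/
noncomputable def funBilinRank (F : Type) [Field F] (V : Type) [AddCommGroup V]
    [Module F V] (S : V → V → F) : ℕ :=
  Module.finrank F V - Module.finrank F (Submodule.span F {x : V | ∀ y, S x y = 0})

section Aux
variable {F E : Type} [Field F] [Fintype F] [Field E] [Fintype E] [Algebra F E]

set_option linter.unusedSectionVars false

/-- x ↦ x^{q^j} is a ring hom on E, where q = |F|. -/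
lemma aux_frob (q : ℕ) (hq : q = Fintype.card F) (j : ℕ) :
    ∃ ψ : E →+* E, ∀ x : E, ψ x = x ^ q ^ j := by
  set p := ringChar F with hp
  haveI : Fact p.Prime := ⟨CharP.char_is_prime F p⟩
  haveI : CharP E p := charP_of_injective_algebraMap (algebraMap F E).injective p
  obtain ⟨s, -, hcard⟩ := FiniteField.card F p
  refine ⟨iterateFrobenius E p (s * j), fun x => ?_⟩
  rw [iterateFrobenius_def, hq, hcard, ← pow_mul]

lemma aux_pow_card (q m : ℕ) (hq : q = Fintype.card F) (hdim : Module.finrank F E = m)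
    (x : E) : x ^ q ^ m = x := by
  have : Fintype.card E = q ^ m := by rw [hq, Module.card_eq_pow_finrank (K := F), hdim]
  rw [← this, FiniteField.pow_card]

lemma aux_trace_frob (q : ℕ) (hq : q = Fintype.card F) (x : E) :
    Algebra.trace F E (x ^ q) = Algebra.trace F E x := by
  obtain ⟨ψ, hψ⟩ := aux_frob (F := F) (E := E) q hq 1
  have halg : ∀ c : F, ψ (algebraMap F E c) = algebraMap F E c := by
    intro c
    rw [hψ, pow_one, ← map_pow, hq, FiniteField.pow_card]
  let alg : E →ₐ[F] E := { ψ with commutes' := halg }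
  have hbij : Function.Bijective alg :=
    (Finite.injective_iff_bijective).mp (RingHom.injective (ψ : E →+* E))
  have := Algebra.trace_eq_of_algEquiv (AlgEquiv.ofBijective alg hbij) x
  simpa [AlgEquiv.ofBijective, alg, hψ, pow_one] using this

lemma aux_trace_pow (q : ℕ) (hq : q = Fintype.card F) (j : ℕ) (x : E) :
    Algebra.trace F E (x ^ q ^ j) = Algebra.trace F E x := by
  induction j with
  | zero => simp
  | succ n ih => rw [pow_succ, pow_mul, aux_trace_frob q hq, ih]

lemma aux_nondeg (z : E) (h : ∀ y, Algebra.trace F E (y * z) = 0) : z = 0 := by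
  have hnd := traceForm_nondegenerate F E
  refine hnd.1 z fun n => ?_
  rw [Algebra.traceForm_apply, mul_comm]
  exact h n

end Aux


/-- **Theorem (construction of maximal additive `d`-codes of symmetric bilinear forms).** -/
theorem construction_of_additive_d_codes_of_symmetric_bilinear_forms
    (F E : Type) [Field F] [Fintype F] [Field E] [Fintype E] [Algebra F E]
    (q : ℕ) (hq : q = Fintype.card F)
    (m d : ℕ) (hd1 : 1 ≤ d) (hdm : d ≤ m) (hpar : d % 2 = m % 2)
    (hdim : Module.finrank F E = m)
    (Φ : (Fin ((m - d) / 2 + 1) → E) → E → E → F)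
    (hΦ : ∀ g x y, Φ g x y =
      Algebra.trace F E (g ⟨0, Nat.succ_pos _⟩ * (x * y)) +
        ∑ i ∈ Finset.univ.filter (fun i : Fin ((m - d) / 2 + 1) => (i : ℕ) ≠ 0),
          Algebra.trace F E (g i * (x * y ^ q ^ (i : ℕ) + x ^ q ^ (i : ℕ) * y))) :
    Function.Injective Φ ∧
    (∀ g, g ≠ 0 → d ≤ funBilinRank F E (Φ g)) ∧
    (∀ S ∈ Set.range Φ, ∀ T ∈ Set.range Φ, S + T ∈ Set.range Φ ∧ -S ∈ Set.range Φ) ∧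
    (Set.range Φ).ncard = q ^ (m * (m - d + 2) / 2) ∧
    (∀ S ∈ Set.range Φ, ∀ T ∈ Set.range Φ, S ≠ T → d ≤ funBilinRank F E (S - T)) := by
  classical
  have hq2 : 2 ≤ q := by rw [hq]; exact Fintype.one_lt_card
  have hk : m - d = 2 * ((m - d) / 2) := by omega
  have hkm : (m - d) / 2 ≤ m := by omega
  have hile : ∀ i : Fin ((m - d) / 2 + 1), (i : ℕ) ≤ (m - d) / 2 :=
    fun i => Nat.lt_succ_iff.mp i.isLt
  set P : (Fin ((m - d) / 2 + 1) → E) → E → E := fun g x =>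
    g ⟨0, Nat.succ_pos _⟩ * x +
      ∑ i ∈ Finset.univ.filter (fun i : Fin ((m - d) / 2 + 1) => (i : ℕ) ≠ 0),
        (g i * x ^ q ^ (i : ℕ) + g i ^ q ^ (m - (i : ℕ)) * x ^ q ^ (m - (i : ℕ))) with hPdef
  have hqm : ∀ x : E, x ^ q ^ m = x := aux_pow_card q m hq hdim
  -- Φ g x y = Tr (y * P g x)
  have hPhiP : ∀ g x y, Φ g x y = Algebra.trace F E (y * P g x) := by
    intro g x y
    rw [hΦ, hPdef]
    have hterm : ∀ i ∈ Finset.univ.filter (fun i : Fin ((m - d) / 2 + 1) => (i : ℕ) ≠ 0),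
        Algebra.trace F E (g i * (x * y ^ q ^ (i : ℕ) + x ^ q ^ (i : ℕ) * y)) =
        Algebra.trace F E
          (y * (g i * x ^ q ^ (i : ℕ) + g i ^ q ^ (m - (i : ℕ)) * x ^ q ^ (m - (i : ℕ)))) := by
      intro i _
      have h1 : Algebra.trace F E (g i * (x * y ^ q ^ (i : ℕ)))
          = Algebra.trace F E (y * (g i ^ q ^ (m - (i : ℕ)) * x ^ q ^ (m - (i : ℕ)))) := by
        have htp := aux_trace_pow (F := F) (E := E) q hq (m - (i : ℕ))
          (g i * (x * y ^ q ^ (i : ℕ)))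
        rw [← htp]
        congr 1
        rw [mul_pow, mul_pow, ← pow_mul, ← pow_add]
        have hsum : (i : ℕ) + (m - (i : ℕ)) = m := by
          have := hile i; omega
        rw [hsum, hqm y]
        ring
      calc Algebra.trace F E (g i * (x * y ^ q ^ (i : ℕ) + x ^ q ^ (i : ℕ) * y))
          = Algebra.trace F E (g i * (x * y ^ q ^ (i : ℕ)))
            + Algebra.trace F E (y * (g i * x ^ q ^ (i : ℕ))) := by
            rw [← map_add]; congr 1; ring
        _ = _ := by rw [h1, ← map_add]; congr 1; ring
    rw [Finset.sum_congr rfl hterm, ← map_sum, mul_add, map_add, ← Finset.mul_sum]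
    congr 2
    ring
  -- radical characterization
  have hrad : ∀ g x, (∀ y, Φ g x y = 0) ↔ P g x = 0 := by
    intro g x
    constructor
    · intro h
      refine aux_nondeg (F := F) _ fun y => ?_
      rw [← hPhiP]; exact h y
    · intro h y
      rw [hPhiP, h, mul_zero, map_zero]
  -- P is additive and F-linear in x
  have hPzero : ∀ g, P g 0 = 0 := by
    intro g
    rw [hPdef]
    simp only [mul_zero, zero_pow (pow_ne_zero _ (by omega : q ≠ 0)), zero_add]
    simp
  have hPadd : ∀ g x x', P g (x + x') = P g x + P g x' := by
    intro g x x'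
    have hpow : ∀ j : ℕ, (x + x') ^ q ^ j = x ^ q ^ j + x' ^ q ^ j := by
      intro j
      obtain ⟨ψ, hψ⟩ := aux_frob (F := F) (E := E) q hq j
      rw [← hψ, ← hψ, ← hψ, map_add]
    rw [hPdef]
    simp only []
    have hterm : ∀ i ∈ Finset.univ.filter (fun i : Fin ((m - d) / 2 + 1) => (i : ℕ) ≠ 0),
        g i * (x + x') ^ q ^ (i : ℕ) + g i ^ q ^ (m - (i : ℕ)) * (x + x') ^ q ^ (m - (i : ℕ)) =
        (g i * x ^ q ^ (i : ℕ) + g i ^ q ^ (m - (i : ℕ)) * x ^ q ^ (m - (i : ℕ))) +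
        (g i * x' ^ q ^ (i : ℕ) + g i ^ q ^ (m - (i : ℕ)) * x' ^ q ^ (m - (i : ℕ))) := by
      intro i _
      rw [hpow, hpow]; ring
    rw [Finset.sum_congr rfl hterm, Finset.sum_add_distrib]
    ring
  have hPsmul : ∀ g (c : F) x, P g (c • x) = c • P g x := by
    intro g c x
    have hcpow : ∀ j : ℕ, (c • x) ^ q ^ j = algebraMap F E c * x ^ q ^ j := by
      intro j
      rw [Algebra.smul_def, mul_pow, ← map_pow]
      congr 2
      rw [hq, FiniteField.pow_card_pow]
    rw [hPdef]
    simp only []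
    have hterm : ∀ i ∈ Finset.univ.filter (fun i : Fin ((m - d) / 2 + 1) => (i : ℕ) ≠ 0),
        g i * (c • x) ^ q ^ (i : ℕ) + g i ^ q ^ (m - (i : ℕ)) * (c • x) ^ q ^ (m - (i : ℕ)) =
        algebraMap F E c *
          (g i * x ^ q ^ (i : ℕ) + g i ^ q ^ (m - (i : ℕ)) * x ^ q ^ (m - (i : ℕ))) := by
      intro i _
      rw [hcpow, hcpow]; ring
    rw [Finset.sum_congr rfl hterm, ← Finset.mul_sum, Algebra.smul_def, Algebra.smul_def]
    ring
  -- rank bound via linearized polynomial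
  have hrankP : ∀ g : Fin ((m - d) / 2 + 1) → E, g ≠ 0 →
      Module.finrank F (Submodule.span F {x : E | ∀ y, Φ g x y = 0}) ≤ m - d := by
    intro g hg
    set R : Submodule F E :=
      { carrier := {x : E | P g x = 0}
        add_mem' := fun {a b} ha hb => by
          simp only [Set.mem_setOf_eq] at *
          rw [hPadd, ha, hb, add_zero]
        zero_mem' := by
          simp only [Set.mem_setOf_eq]
          exact hPzero g
        smul_mem' := fun c a ha => by
          simp only [Set.mem_setOf_eq] at *
          rw [hPsmul, ha, smul_zero] } with hRdef
    have hmemR : ∀ x : E, x ∈ R ↔ P g x = 0 := fun x => Iff.rfl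
    have hsetR : {x : E | ∀ y, Φ g x y = 0} = (R : Set E) := by
      ext x
      simp only [Set.mem_setOf_eq, SetLike.mem_coe, hmemR]
      exact hrad g x
    rw [hsetR, Submodule.span_eq]
    -- the polynomial
    set L : Polynomial E :=
      Polynomial.C (g ⟨0, Nat.succ_pos _⟩ ^ q ^ ((m - d) / 2)) *
          Polynomial.X ^ q ^ ((m - d) / 2) +
        ∑ i ∈ Finset.univ.filter (fun i : Fin ((m - d) / 2 + 1) => (i : ℕ) ≠ 0),
          (Polynomial.C (g i ^ q ^ ((m - d) / 2)) *
              Polynomial.X ^ q ^ ((m - d) / 2 + (i : ℕ)) +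
            Polynomial.C (g i ^ q ^ ((m - d) / 2 - (i : ℕ))) *
              Polynomial.X ^ q ^ ((m - d) / 2 - (i : ℕ))) with hLdef
    have hcomb : ∀ (a : E) (j : ℕ), j ≤ (m - d) / 2 →
        (a ^ q ^ (m - j)) ^ q ^ ((m - d) / 2) = a ^ q ^ ((m - d) / 2 - j) := by
      intro a j hj
      rw [← pow_mul, ← pow_add,
        (by omega : m - j + (m - d) / 2 = m + ((m - d) / 2 - j)), pow_add, pow_mul, hqm]
    have hcomb2 : ∀ (a : E) (j : ℕ),
        (a ^ q ^ j) ^ q ^ ((m - d) / 2) = a ^ q ^ ((m - d) / 2 + j) := by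
      intro a j
      rw [← pow_mul, ← pow_add, Nat.add_comm]
    have heval : ∀ x : E, Polynomial.eval x L = (P g x) ^ q ^ ((m - d) / 2) := by
      intro x
      obtain ⟨ψ, hψ⟩ := aux_frob (F := F) (E := E) q hq ((m - d) / 2)
      rw [← hψ, hPdef]
      simp only [map_add, map_mul, map_sum]
      rw [hLdef]
      simp only [Polynomial.eval_add, Polynomial.eval_finset_sum, Polynomial.eval_mul,
        Polynomial.eval_C, Polynomial.eval_pow, Polynomial.eval_X]
      refine congrArg₂ (· + ·) ?_ (Finset.sum_congr rfl fun i hi => ?_)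
      · rw [hψ, hψ]
      · rw [hψ, hψ, hψ, hψ, hcomb2 x (i : ℕ), hcomb x (i : ℕ) (hile i),
          hcomb (g i) (i : ℕ) (hile i)]
    -- L ≠ 0
    obtain ⟨i₀, hi₀⟩ : ∃ i, g i ≠ 0 := Function.ne_iff.mp hg
    have hpowinj : ∀ a b : ℕ, q ^ a = q ^ b → a = b :=
      fun a b h => Nat.pow_right_injective hq2 h
    have hcoeff : L.coeff (q ^ ((m - d) / 2 + (i₀ : ℕ))) = g i₀ ^ q ^ ((m - d) / 2) := by
      rw [hLdef]
      simp only [Polynomial.coeff_add, Polynomial.finset_sum_coeff, Polynomial.coeff_C_mul,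
        Polynomial.coeff_X_pow]
      by_cases h0 : (i₀ : ℕ) = 0
      · have hi₀eq : i₀ = ⟨0, Nat.succ_pos _⟩ := Fin.ext h0
        rw [if_pos (by rw [h0, Nat.add_zero])]
        have hzero : ∀ i ∈ Finset.univ.filter
            (fun i : Fin ((m - d) / 2 + 1) => (i : ℕ) ≠ 0),
            g i ^ q ^ ((m - d) / 2) *
                (if q ^ ((m - d) / 2 + (i₀ : ℕ)) = q ^ ((m - d) / 2 + (i : ℕ)) then (1:E) else 0) +
              g i ^ q ^ ((m - d) / 2 - (i : ℕ)) *
                (if q ^ ((m - d) / 2 + (i₀ : ℕ)) = q ^ ((m - d) / 2 - (i : ℕ)) then (1:E) else 0)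
              = 0 := by
          intro i hi
          simp only [Finset.mem_filter] at hi
          have hi' := hile i
          rw [if_neg (fun h => hi.2 (by have := hpowinj _ _ h; omega)),
            if_neg (fun h => hi.2 (by have := hpowinj _ _ h; omega))]
          ring
        rw [Finset.sum_congr rfl hzero]
        rw [← hi₀eq]
        simp
      · rw [if_neg (fun h => h0 (by have := hpowinj _ _ h; omega))]
        have hmem : i₀ ∈ Finset.univ.filter
            (fun i : Fin ((m - d) / 2 + 1) => (i : ℕ) ≠ 0) := by
          simp only [Finset.mem_filter, Finset.mem_univ, true_and]; exact h0
        rw [Finset.sum_eq_single_of_mem i₀ hmem (fun i hi hne => by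
          simp only [Finset.mem_filter] at hi
          have hi' := hile i
          have hne' : (i : ℕ) ≠ (i₀ : ℕ) := fun h => hne (Fin.ext h)
          rw [if_neg (fun h => hne' (by have := hpowinj _ _ h; omega)),
            if_neg (fun h => hi.2 (by have := hpowinj _ _ h; omega))]
          ring)]
        have hi₀' := hile i₀
        rw [if_pos rfl, if_neg (fun h => h0 (by have := hpowinj _ _ h; omega))]
        ring
    have hLne : L ≠ 0 := fun hL => by
      rw [hL, Polynomial.coeff_zero] at hcoeff
      exact pow_ne_zero _ hi₀ hcoeff.symm
    -- degree bound
    have hdeg : L.natDegree ≤ q ^ (m - d) := by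
      rw [hLdef]
      refine le_trans (Polynomial.natDegree_add_le _ _) (max_le ?_ ?_)
      · refine le_trans (Polynomial.natDegree_C_mul_le _ _) ?_
        rw [Polynomial.natDegree_X_pow]
        exact Nat.pow_le_pow_right (by omega) (by omega)
      · refine Polynomial.natDegree_sum_le_of_forall_le _ _ fun i hi => ?_
        have hi' := hile i
        refine le_trans (Polynomial.natDegree_add_le _ _) (max_le ?_ ?_) <;>
          refine le_trans (Polynomial.natDegree_C_mul_le _ _) ?_ <;>
            rw [Polynomial.natDegree_X_pow] <;>
              exact Nat.pow_le_pow_right (by omega) (by omega)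
    -- cardinality bound
    haveI : Fintype R := Fintype.ofFinite R
    have hcardR : Fintype.card R = q ^ Module.finrank F R := by
      rw [hq]
      exact Module.card_eq_pow_finrank (K := F)
    have hinjmap : Fintype.card R ≤ (L.roots.toFinset).card := by
      have : Function.Injective (fun x : R => (⟨(x : E), by
          rw [Multiset.mem_toFinset, Polynomial.mem_roots hLne]
          have hx : P g (x : E) = 0 := (hmemR _).mp x.2
          unfold Polynomial.IsRoot
          rw [heval, hx]
          exact zero_pow (pow_ne_zero _ (by omega : q ≠ 0))⟩ :
            {y // y ∈ L.roots.toFinset})) := by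
        intro a b hab
        have hval : (a : E) = (b : E) := by
          have h' := hab
          simp only [Subtype.mk.injEq] at h'
          exact h'
        exact Subtype.ext hval
      calc Fintype.card R ≤ Fintype.card {y // y ∈ L.roots.toFinset} :=
            Fintype.card_le_of_injective _ this
        _ = (L.roots.toFinset).card := Fintype.card_coe _
    have hbound : Fintype.card R ≤ q ^ (m - d) := by
      refine le_trans hinjmap (le_trans ?_ (le_trans (Polynomial.card_roots' L) hdeg))
      exact_mod_cast Multiset.toFinset_card_le _
    rw [hcardR] at hbound
    exact (Nat.pow_le_pow_iff_right hq2).mp hbound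
  -- rank lower bound
  have hrank : ∀ g, g ≠ 0 → d ≤ funBilinRank F E (Φ g) := by
    intro g hg
    have h1 := hrankP g hg
    unfold funBilinRank
    rw [hdim]
    omega
  -- additivity of Φ
  have haddΦ : ∀ g h, Φ (g + h) = Φ g + Φ h := by
    intro g h
    funext x y
    simp only [hΦ, Pi.add_apply, add_mul, map_add, Finset.sum_add_distrib]
    ring
  have hnegΦ : ∀ g, Φ (-g) = -Φ g := by
    intro g
    funext x y
    simp only [hΦ, Pi.neg_apply, neg_mul, map_neg, Finset.sum_neg_distrib]
    ring
  have hsubΦ : ∀ g h, Φ (g - h) = Φ g - Φ h := by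
    intro g h
    rw [sub_eq_add_neg, sub_eq_add_neg, haddΦ, hnegΦ]
  -- injectivity
  have hinj : Function.Injective Φ := by
    intro g g' hgg
    by_contra hne
    have hne' : g - g' ≠ 0 := sub_ne_zero.mpr hne
    have h1 := hrank _ hne'
    have h2 : Φ (g - g') = 0 := by rw [hsubΦ, hgg, sub_self]
    rw [h2] at h1
    have h0 : funBilinRank F E (0 : E → E → F) = 0 := by
      unfold funBilinRank
      have huniv : {x : E | ∀ y : E, (0 : E → E → F) x y = 0} = Set.univ := by
        ext x; simp
      rw [huniv, Submodule.span_univ, finrank_top]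
      exact Nat.sub_self _
    rw [h0] at h1
    omega
  -- cardinality
  have hcard : (Set.range Φ).ncard = q ^ (m * (m - d + 2) / 2) := by
    rw [← Nat.card_coe_set_eq, Nat.card_range_of_injective hinj]
    have h1 : Nat.card (Fin ((m - d) / 2 + 1) → E) = (q ^ m) ^ ((m - d) / 2 + 1) := by
      rw [Nat.card_eq_fintype_card, Fintype.card_fun, Fintype.card_fin]
      congr 1
      rw [hq, Module.card_eq_pow_finrank (K := F), hdim]
    rw [h1, ← pow_mul]
    congr 1
    rw [(by omega : m - d + 2 = 2 * ((m - d) / 2 + 1)),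
      (by ring : m * (2 * ((m - d) / 2 + 1)) = 2 * (m * ((m - d) / 2 + 1))),
      Nat.mul_div_cancel_left _ (by norm_num)]
  refine ⟨hinj, hrank, ?_, hcard, ?_⟩
  · rintro S ⟨g, rfl⟩ T ⟨h, rfl⟩
    exact ⟨⟨g + h, haddΦ g h⟩, ⟨-g, hnegΦ g⟩⟩
  · rintro S ⟨g, rfl⟩ T ⟨h, rfl⟩ hST
    have hgh : g - h ≠ 0 := sub_ne_zero.mpr fun e => hST (by rw [e])
    rw [← hsubΦ]
    exact hrank _ hgh
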